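/- Let U be compact metric and J : (ℝ^d × U)² → ℝ L_J-Lipschitz. For (x,σ), (x',σ') ∈ ℝ^d × P(U) define f_σ(x,σ,x',σ') = (∫_U J(x,·,x',u') dσ'(u') − ∫_{U×U} J(x,w,x',u') dσ'(u')dσ(w)) σ ∈ M₀(U). Then f_σ is Lipschitz: ‖f_σ(y₁, y₁') − f_σ(y₂, y₂')‖_BL ≤ 2 L_J (1 + diam U) ( |x₁−x₂| + ‖σ₁−σ₂‖_BL + |x₁'−x₂'| + ‖σ₁'−σ₂'‖_BL ). -/

import Mathlib

open MeasureTheory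

/-- The (least) Lipschitz constant of a real function on a metric space. -/
noncomputable def lipConst {U : Type*} [MetricSpace U] (f : U → ℝ) : ℝ :=
  sInf {K : ℝ | 0 ≤ K ∧ ∀ u v, |f u - f v| ≤ K * dist u v}

/-- The bounded Lipschitz norm `sup|f| + Lip(f)` of a real function. -/
noncomputable def lipNorm {U : Type*} [MetricSpace U] (f : U → ℝ) : ℝ :=
  (⨆ u, |f u|) + lipConst f

/-- The dual bounded Lipschitz (BL) norm of a functional `I`. -/
noncomputable def blNormOf {U : Type*} [MetricSpace U] (I : (U → ℝ) → ℝ) : ℝ :=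
  sSup {r : ℝ | ∃ φ : U → ℝ, (∃ K, LipschitzWith K φ) ∧ lipNorm φ ≤ 1 ∧ r = I φ}

/-- Pairing of the replicator interaction term
`f_σ(x,σ,x',σ') = (∫ J(x,·,x',u')dσ'(u') − ∫∫ J(x,w,x',u')dσ'(u')dσ(w))σ`
with a test function `φ`. -/
noncomputable def fσPair {U : Type*} [MetricSpace U] [MeasurableSpace U] {d : ℕ}
    (J : (EuclideanSpace ℝ (Fin d) × U) → (EuclideanSpace ℝ (Fin d) × U) → ℝ)
    (x x' : EuclideanSpace ℝ (Fin d)) (σ σ' : Measure U) (φ : U → ℝ) : ℝ :=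
  ∫ u, φ u * ((∫ u', J (x, u) (x', u') ∂σ') -
      ∫ w, ∫ u', J (x, w) (x', u') ∂σ' ∂σ) ∂σ

section helpers
variable {U : Type*} [MetricSpace U]

lemma lipConst_nonneg (f : U → ℝ) : 0 ≤ lipConst f :=
  Real.sInf_nonneg fun _ hx => hx.1

lemma lipConst_le {f : U → ℝ} {K : ℝ} (hK : 0 ≤ K)
    (h : ∀ u v, |f u - f v| ≤ K * dist u v) : lipConst f ≤ K :=
  csInf_le ⟨0, fun _ hx => hx.1⟩ ⟨hK, h⟩

lemma dist_le_lipConst {f : U → ℝ} {K₀ : NNReal} (hf : LipschitzWith K₀ f) (u v : U) :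
    |f u - f v| ≤ lipConst f * dist u v := by
  have hne : Set.Nonempty {K : ℝ | 0 ≤ K ∧ ∀ u v, |f u - f v| ≤ K * dist u v} := by
    refine ⟨K₀, K₀.2, fun u v => ?_⟩
    simpa [Real.dist_eq] using hf.dist_le_mul u v
  rcases eq_or_lt_of_le (dist_nonneg (x := u) (y := v)) with h0 | h0
  · have huv : u = v := dist_eq_zero.mp h0.symm
    simp [huv, ← h0]
  · have : |f u - f v| / dist u v ≤ lipConst f := by
      refine le_csInf hne fun K hK => ?_
      rw [div_le_iff₀ h0]
      exact hK.2 u v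
    calc |f u - f v| = |f u - f v| / dist u v * dist u v := by field_simp
    _ ≤ lipConst f * dist u v := by
        exact mul_le_mul_of_nonneg_right this (le_of_lt h0)

lemma cont_integrable [CompactSpace U] [MeasurableSpace U] [BorelSpace U]
    (μ : Measure U) [IsFiniteMeasure μ] {f : U → ℝ} (hf : Continuous f) :
    Integrable f μ := by
  have := hf.continuousOn.integrableOn_compact (μ := μ) isCompact_univ
  rwa [integrableOn_univ] at this

end helpers

set_option linter.unusedSectionVars false
section pairing
variable {U : Type*} [MetricSpace U] [CompactSpace U] [MeasurableSpace U] [BorelSpace U]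

lemma nonempty_of_prob (μ : Measure U) [IsProbabilityMeasure μ] : Nonempty U := by
  by_contra h
  rw [not_nonempty_iff] at h
  have h1 : μ Set.univ = 1 := measure_univ
  rw [Set.univ_eq_empty_iff.mpr h, measure_empty] at h1
  exact zero_ne_one h1

lemma bl_bddAbove (μ ν : Measure U) [IsProbabilityMeasure μ] [IsProbabilityMeasure ν] :
    BddAbove {r : ℝ | ∃ φ : U → ℝ, (∃ K, LipschitzWith K φ) ∧ lipNorm φ ≤ 1 ∧
      r = ∫ u, φ u ∂μ - ∫ u, φ u ∂ν} := by
  refine ⟨2, fun r hr => ?_⟩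
  obtain ⟨φ, ⟨K, hK⟩, hn, rfl⟩ := hr
  have hb : ∀ u, |φ u| ≤ 1 := by
    intro u
    have h1 : |φ u| ≤ ⨆ w, |φ w| :=
      le_ciSup (f := fun w => |φ w|) (isCompact_range hK.continuous.abs).bddAbove u
    have h2 : (⨆ w, |φ w|) + lipConst φ ≤ 1 := hn
    linarith [lipConst_nonneg φ]
  have key : ∀ (ρ : Measure U), IsProbabilityMeasure ρ → |∫ u, φ u ∂ρ| ≤ 1 := by
    intro ρ hρ
    have := norm_integral_le_of_norm_le_const (μ := ρ) (f := φ) (C := 1)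
      (Filter.Eventually.of_forall fun u => by simpa using hb u)
    simpa [Real.norm_eq_abs] using this
  have h1 := abs_le.mp (key μ ‹_›)
  have h2 := abs_le.mp (key ν ‹_›)
  linarith [h1.2, h2.1]

lemma bl_nonneg (μ ν : Measure U) [IsProbabilityMeasure μ] [IsProbabilityMeasure ν] :
    0 ≤ blNormOf (fun φ => ∫ u, φ u ∂μ - ∫ u, φ u ∂ν) := by
  have : Nonempty U := nonempty_of_prob μ
  apply Real.sSup_nonneg'
  refine ⟨0, ⟨fun _ => 0, ⟨0, LipschitzWith.const' 0⟩, ?_, by simp⟩, le_refl 0⟩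
  have h1 : lipConst (fun _ : U => (0:ℝ)) ≤ 0 := lipConst_le le_rfl (fun u v => by simp)
  have h2 : (⨆ _ : U, |(0:ℝ)|) = 0 := by simp
  simp only [lipNorm, h2]
  linarith

/-- Main duality estimate: pairing a bounded Lipschitz function against `μ - ν`. -/
lemma pair_abs_le (μ ν : Measure U) [IsProbabilityMeasure μ] [IsProbabilityMeasure ν]
    (f : U → ℝ) (A K : ℝ) (hA0 : 0 ≤ A) (hK0 : 0 ≤ K)
    (hA : ∀ u, |f u| ≤ A) (hK : ∀ u v, |f u - f v| ≤ K * dist u v) :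
    |(∫ u, f u ∂μ) - ∫ u, f u ∂ν| ≤
      (A + K) * blNormOf (fun φ => ∫ u, φ u ∂μ - ∫ u, φ u ∂ν) := by
  have hne : Nonempty U := nonempty_of_prob μ
  set B := blNormOf (fun φ => ∫ u, φ u ∂μ - ∫ u, φ u ∂ν) with hB
  have hB0 : 0 ≤ B := bl_nonneg μ ν
  rcases eq_or_lt_of_le (add_nonneg hA0 hK0) with hc | hc
  · -- A + K = 0, so f ≡ 0
    have hA' : A = 0 := by linarith
    have hf0 : ∀ u, f u = 0 := fun u => by
      have := hA u; rw [hA'] at this; exact abs_eq_zero.mp (le_antisymm this (abs_nonneg _))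
    have : f = fun _ => 0 := funext hf0
    simp [this, ← hc]
  · set c := A + K with hcdef
    set φ := fun u => f u / c with hφ
    have hmem : ∀ (g : U → ℝ), (∀ u, |g u| ≤ A) → (∀ u v, |g u - g v| ≤ K * dist u v) →
        ((∫ u, g u ∂μ) - ∫ u, g u ∂ν) / c ≤ B := by
      intro g hgA hgK
      apply le_csSup (bl_bddAbove μ ν)
      refine ⟨fun u => g u / c, ⟨(K / c).toNNReal, ?_⟩, ?_, ?_⟩
      · apply LipschitzWith.of_dist_le_mul
        intro u v
        rw [Real.dist_eq, Real.coe_toNNReal _ (div_nonneg hK0 hc.le)]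
        rw [div_sub_div_same, abs_div, abs_of_pos hc, div_mul_eq_mul_div]
        gcongr
        exact hgK u v
      · have hs : (⨆ u, |g u / c|) ≤ A / c := by
          apply ciSup_le
          intro u
          rw [abs_div, abs_of_pos hc]
          gcongr
          exact hgA u
        have hl : lipConst (fun u => g u / c) ≤ K / c := by
          apply lipConst_le (div_nonneg hK0 hc.le)
          intro u v
          rw [div_sub_div_same, abs_div, abs_of_pos hc, div_mul_eq_mul_div]
          gcongr
          exact hgK u v
        have : A / c + K / c = 1 := by
          rw [← add_div, div_self (ne_of_gt hc)]
        calc lipNorm (fun u => g u / c) ≤ A / c + K / c := add_le_add hs hl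
          _ = 1 := this
      · rw [integral_div, integral_div, div_sub_div_same]
    have h1 := hmem f hA hK
    have h2 := hmem (fun u => -f u) (fun u => by simpa using hA u)
      (fun u v => by
        rw [neg_sub_neg, dist_comm]
        exact hK v u)
    rw [integral_neg, integral_neg] at h2
    have h1' : (∫ u, f u ∂μ) - ∫ u, f u ∂ν ≤ c * B := by
      rw [div_le_iff₀ hc] at h1; linarith
    have h2' : -((∫ u, f u ∂μ) - ∫ u, f u ∂ν) ≤ c * B := by
      have : (-(∫ u, f u ∂μ) - -(∫ u, f u ∂ν)) / c ≤ B := h2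
      rw [div_le_iff₀ hc] at this; linarith
    rw [abs_le]
    constructor <;> linarith
end pairing

section claims
variable {U : Type*} [MetricSpace U] [CompactSpace U] [MeasurableSpace U] [BorelSpace U]

lemma master_claim (σ : Measure U) [IsProbabilityMeasure σ] (φ Ga Gb : U → ℝ)
    (hφc : Continuous φ) (hφb : ∀ u, |φ u| ≤ 1)
    (hGa : Continuous Ga) (hGb : Continuous Gb)
    (ε : ℝ) (hε : 0 ≤ ε) (hab : ∀ u, |Ga u - Gb u| ≤ ε) :
    (∫ u, φ u * (Ga u - ∫ w, Ga w ∂σ) ∂σ) -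
      (∫ u, φ u * (Gb u - ∫ w, Gb w ∂σ) ∂σ) ≤ 2 * ε := by
  set ca := ∫ w, Ga w ∂σ with hca
  set cb := ∫ w, Gb w ∂σ with hcb
  have hcab : |ca - cb| ≤ ε := by
    rw [hca, hcb, ← integral_sub (cont_integrable σ hGa) (cont_integrable σ hGb)]
    have := norm_integral_le_of_norm_le_const (μ := σ) (C := ε)
      (f := fun w => Ga w - Gb w)
      (Filter.Eventually.of_forall fun w => by simpa [Real.norm_eq_abs] using hab w)
    simpa [Real.norm_eq_abs] using this
  have hint1 : Integrable (fun u => φ u * (Ga u - ca)) σ :=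
    cont_integrable σ (hφc.mul (hGa.sub continuous_const))
  have hint2 : Integrable (fun u => φ u * (Gb u - cb)) σ :=
    cont_integrable σ (hφc.mul (hGb.sub continuous_const))
  rw [← integral_sub hint1 hint2]
  have hpt : ∀ u, |φ u * (Ga u - ca) - φ u * (Gb u - cb)| ≤ 2 * ε := by
    intro u
    have he : φ u * (Ga u - ca) - φ u * (Gb u - cb) =
        φ u * ((Ga u - Gb u) - (ca - cb)) := by ring
    rw [he, abs_mul]
    have h1 : |(Ga u - Gb u) - (ca - cb)| ≤ 2 * ε := by
      have := abs_sub (Ga u - Gb u) (ca - cb)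
      linarith [hab u]
    calc |φ u| * |(Ga u - Gb u) - (ca - cb)| ≤ 1 * (2 * ε) :=
          mul_le_mul (hφb u) h1 (abs_nonneg _) zero_le_one
      _ = 2 * ε := one_mul _
  have := norm_integral_le_of_norm_le_const (μ := σ) (C := 2 * ε)
    (f := fun u => φ u * (Ga u - ca) - φ u * (Gb u - cb))
    (Filter.Eventually.of_forall fun u => by simpa [Real.norm_eq_abs] using hpt u)
  rw [Real.norm_eq_abs] at this
  simp only [measure_univ, ENNReal.toReal_one, probReal_univ, mul_one] at this
  exact le_trans (le_abs_self _) this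

lemma claim2 (σa σb : Measure U) [IsProbabilityMeasure σa] [IsProbabilityMeasure σb]
    (φ G : U → ℝ) (hφc : Continuous φ) (hGc : Continuous G)
    (KG : ℝ) (hKG0 : 0 ≤ KG) (hGlip : ∀ u v, |G u - G v| ≤ KG * dist u v)
    (s L : ℝ) (hs0 : 0 ≤ s) (hL0 : 0 ≤ L)
    (hφb : ∀ u, |φ u| ≤ s) (hφl : ∀ u v, |φ u - φ v| ≤ L * dist u v)
    (hsL : s + L ≤ 1)
    (D : ℝ) (hD0 : 0 ≤ D) (hD : ∀ u v : U, dist u v ≤ D) :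
    (∫ u, φ u * (G u - ∫ w, G w ∂σa) ∂σa) -
      (∫ u, φ u * (G u - ∫ w, G w ∂σb) ∂σb) ≤
      2 * KG * (1 + D) * blNormOf (fun ψ => ∫ u, ψ u ∂σa - ∫ u, ψ u ∂σb) := by
  set B := blNormOf (fun ψ => ∫ u, ψ u ∂σa - ∫ u, ψ u ∂σb) with hB
  have hB0 : 0 ≤ B := bl_nonneg σa σb
  set ca := ∫ w, G w ∂σa with hca
  set cb := ∫ w, G w ∂σb with hcb
  set h : U → ℝ := fun u => G u - ca with hh
  have hhc : Continuous h := hGc.sub continuous_const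
  have hhl : ∀ u v, |h u - h v| ≤ KG * dist u v := by
    intro u v
    have : h u - h v = G u - G v := by simp [hh]
    rw [this]; exact hGlip u v
  have hhb : ∀ u, |h u| ≤ KG * D := by
    intro u
    have he : ∫ w, (G u - G w) ∂σa = h u := by
      rw [integral_sub (integrable_const _) (cont_integrable σa hGc), integral_const]
      simp [hh, hca]
    rw [← he]
    have := norm_integral_le_of_norm_le_const (μ := σa) (C := KG * D)
      (f := fun w => G u - G w)
      (Filter.Eventually.of_forall fun w => by
        rw [Real.norm_eq_abs]
        exact le_trans (hGlip u w) (mul_le_mul_of_nonneg_left (hD u w) hKG0))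
    rw [Real.norm_eq_abs] at this
    simpa using this
  -- split the second integral
  have hsplit : (∫ u, φ u * (G u - cb) ∂σb) =
      (∫ u, φ u * h u ∂σb) + (ca - cb) * ∫ u, φ u ∂σb := by
    have he : ∀ u, φ u * (G u - cb) = φ u * h u + (ca - cb) * φ u := by
      intro u; simp only [hh]; ring
    calc ∫ u, φ u * (G u - cb) ∂σb = ∫ u, (φ u * h u + (ca - cb) * φ u) ∂σb := by
          exact integral_congr_ae (Filter.Eventually.of_forall fun u => he u)
      _ = (∫ u, φ u * h u ∂σb) + ∫ u, (ca - cb) * φ u ∂σb :=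
          integral_add (cont_integrable σb (hφc.mul hhc))
            ((cont_integrable σb hφc).const_mul _)
      _ = (∫ u, φ u * h u ∂σb) + (ca - cb) * ∫ u, φ u ∂σb := by
          rw [integral_const_mul]
  have e1 : |(∫ u, φ u * h u ∂σa) - ∫ u, φ u * h u ∂σb| ≤
      (s * (KG * D) + (s * KG + L * (KG * D))) * B := by
    apply pair_abs_le σa σb (fun u => φ u * h u) (s * (KG * D)) (s * KG + L * (KG * D))
      (mul_nonneg hs0 (mul_nonneg hKG0 hD0))
      (by positivity)
    · intro u
      rw [abs_mul]
      exact mul_le_mul (hφb u) (hhb u) (abs_nonneg _) hs0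
    · intro u v
      have he : φ u * h u - φ v * h v = φ u * (h u - h v) + (φ u - φ v) * h v := by
        ring
      rw [he]
      calc |φ u * (h u - h v) + (φ u - φ v) * h v| ≤
            |φ u * (h u - h v)| + |(φ u - φ v) * h v| := abs_add_le _ _
        _ ≤ s * (KG * dist u v) + (L * dist u v) * (KG * D) := by
            rw [abs_mul, abs_mul]
            have t1 : |φ u| * |h u - h v| ≤ s * (KG * dist u v) :=
              mul_le_mul (hφb u) (hhl u v) (abs_nonneg _) hs0
            have t2 : |φ u - φ v| * |h v| ≤ (L * dist u v) * (KG * D) :=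
              mul_le_mul (hφl u v) (hhb v) (abs_nonneg _) (by positivity)
            linarith
        _ = (s * KG + L * (KG * D)) * dist u v := by ring
  have e2 : |ca - cb| ≤ (KG * D + KG) * B := by
    have ha0 : ∫ u, h u ∂σa = 0 := by
      rw [hh]
      rw [integral_sub (cont_integrable σa hGc) (integrable_const _), integral_const]
      simp [hca]
    have hb0 : ∫ u, h u ∂σb = cb - ca := by
      rw [hh]
      rw [integral_sub (cont_integrable σb hGc) (integrable_const _), integral_const]
      simp [hcb]
    have := pair_abs_le σa σb h (KG * D) KG (mul_nonneg hKG0 hD0) hKG0 hhb hhl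
    rw [ha0, hb0] at this
    rw [zero_sub, abs_neg, abs_sub_comm] at this
    exact this
  have e3 : |∫ u, φ u ∂σb| ≤ s := by
    have := norm_integral_le_of_norm_le_const (μ := σb) (C := s) (f := φ)
      (Filter.Eventually.of_forall fun u => by simpa [Real.norm_eq_abs] using hφb u)
    rw [Real.norm_eq_abs] at this
    simpa using this
  have key : (∫ u, φ u * (G u - ca) ∂σa) - (∫ u, φ u * (G u - cb) ∂σb) =
      ((∫ u, φ u * h u ∂σa) - ∫ u, φ u * h u ∂σb) - (ca - cb) * ∫ u, φ u ∂σb := by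
    rw [hsplit]; simp only [hh]; ring
  rw [key]
  have habs : |(ca - cb) * ∫ u, φ u ∂σb| ≤ ((KG * D + KG) * B) * s := by
    rw [abs_mul]
    exact mul_le_mul e2 e3 (abs_nonneg _) (by positivity)
  have l1 := (abs_le.mp e1).2
  have l2 := (abs_le.mp habs).1
  have hineq : (s * (KG * D) + (s * KG + L * (KG * D))) * B +
      ((KG * D + KG) * B) * s ≤ 2 * KG * (1 + D) * B := by
    nlinarith [mul_nonneg (mul_nonneg hKG0 hB0) (by linarith : (0:ℝ) ≤ 2 - 2*s),
      mul_nonneg (mul_nonneg (mul_nonneg hKG0 hB0) hD0) (by linarith : (0:ℝ) ≤ 2 - 2*s - L)]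
  linarith

end claims

section main
variable {U : Type*} [MetricSpace U] [CompactSpace U] [MeasurableSpace U] [BorelSpace U]

lemma int_diff_le (σ : Measure U) [IsProbabilityMeasure σ] (f g : U → ℝ)
    (hf : Continuous f) (hg : Continuous g) (ε : ℝ)
    (hpt : ∀ u, |f u - g u| ≤ ε) :
    |(∫ u, f u ∂σ) - ∫ u, g u ∂σ| ≤ ε := by
  rw [← integral_sub (cont_integrable σ hf) (cont_integrable σ hg)]
  have := norm_integral_le_of_norm_le_const (μ := σ) (C := ε) (f := fun u => f u - g u)
    (Filter.Eventually.of_forall fun u => by simpa [Real.norm_eq_abs] using hpt u)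
  rw [Real.norm_eq_abs] at this
  simpa using this

end main

/-- Lipschitz estimate for the replicator interaction term `f_σ` in the BL norm:
`‖f_σ(y₁,y₁') − f_σ(y₂,y₂')‖_BL ≤ 2L_J(1+diam U)(|x₁−x₂| + ‖σ₁−σ₂‖_BL +
|x₁'−x₂'| + ‖σ₁'−σ₂'‖_BL)`. -/
theorem stmt17 {U : Type*} [MetricSpace U] [CompactSpace U]
    [MeasurableSpace U] [BorelSpace U] {d : ℕ}
    (J : (EuclideanSpace ℝ (Fin d) × U) → (EuclideanSpace ℝ (Fin d) × U) → ℝ)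
    (LJ : NNReal)
    (hJ : LipschitzWith LJ
      (fun p : (EuclideanSpace ℝ (Fin d) × U) × (EuclideanSpace ℝ (Fin d) × U) =>
        J p.1 p.2))
    (x₁ x₂ x₁' x₂' : EuclideanSpace ℝ (Fin d)) (σ₁ σ₂ σ₁' σ₂' : Measure U)
    [IsProbabilityMeasure σ₁] [IsProbabilityMeasure σ₂]
    [IsProbabilityMeasure σ₁'] [IsProbabilityMeasure σ₂'] :
    blNormOf (fun φ => fσPair J x₁ x₁' σ₁ σ₁' φ - fσPair J x₂ x₂' σ₂ σ₂' φ) ≤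
      2 * (LJ : ℝ) * (1 + Metric.diam (Set.univ : Set U)) *
        (dist x₁ x₂ + blNormOf (fun φ => ∫ u, φ u ∂σ₁ - ∫ u, φ u ∂σ₂) +
         dist x₁' x₂' + blNormOf (fun φ => ∫ u, φ u ∂σ₁' - ∫ u, φ u ∂σ₂')) := by
  haveI hne : Nonempty U := nonempty_of_prob σ₁
  set D := Metric.diam (Set.univ : Set U) with hDdef
  have hD0 : 0 ≤ D := Metric.diam_nonneg
  have hDle : ∀ u v : U, dist u v ≤ D := fun u v =>
    Metric.dist_le_diam_of_mem isCompact_univ.isBounded (Set.mem_univ u) (Set.mem_univ v)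
  set B := blNormOf (fun φ => ∫ u, φ u ∂σ₁ - ∫ u, φ u ∂σ₂) with hBdef
  set B' := blNormOf (fun φ => ∫ u, φ u ∂σ₁' - ∫ u, φ u ∂σ₂') with hB'def
  have hB0 : 0 ≤ B := bl_nonneg σ₁ σ₂
  have hB'0 : 0 ≤ B' := bl_nonneg σ₁' σ₂'
  have hLJ0 : (0:ℝ) ≤ LJ := LJ.2
  -- pointwise Lipschitz estimates on slices of J
  have hdpair : ∀ (a b : EuclideanSpace ℝ (Fin d) × U) (c e : EuclideanSpace ℝ (Fin d) × U),
      |J a c - J b e| ≤ LJ * dist (a, c) (b, e) := by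
    intro a b c e
    have := hJ.dist_le_mul (a, c) (b, e)
    rw [Real.dist_eq] at this
    simpa using this
  have hJu : ∀ (x x' : EuclideanSpace ℝ (Fin d)) (u v : U) (u' : U),
      |J (x, u) (x', u') - J (x, v) (x', u')| ≤ LJ * dist u v := by
    intro x x' u v u'
    refine le_trans (hdpair (x, u) (x, v) (x', u') (x', u')) ?_
    have hd : dist ((x, u), (x', u')) ((x, v), (x', u')) ≤ dist u v := by
      rw [Prod.dist_eq, Prod.dist_eq, Prod.dist_eq]
      simp [dist_self, dist_nonneg]
    exact mul_le_mul_of_nonneg_left hd hLJ0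
  have hJx : ∀ (x y x' : EuclideanSpace ℝ (Fin d)) (u u' : U),
      |J (x, u) (x', u') - J (y, u) (x', u')| ≤ LJ * dist x y := by
    intro x y x' u u'
    refine le_trans (hdpair (x, u) (y, u) (x', u') (x', u')) ?_
    have hd : dist ((x, u), (x', u')) ((y, u), (x', u')) ≤ dist x y := by
      rw [Prod.dist_eq, Prod.dist_eq, Prod.dist_eq]
      simp [dist_self, dist_nonneg]
    exact mul_le_mul_of_nonneg_left hd hLJ0
  have hJx' : ∀ (x x' y' : EuclideanSpace ℝ (Fin d)) (u u' : U),
      |J (x, u) (x', u') - J (x, u) (y', u')| ≤ LJ * dist x' y' := by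
    intro x x' y' u u'
    refine le_trans (hdpair (x, u) (x, u) (x', u') (y', u')) ?_
    have hd : dist ((x, u), (x', u')) ((x, u), (y', u')) ≤ dist x' y' := by
      rw [Prod.dist_eq, Prod.dist_eq, Prod.dist_eq]
      simp [dist_self, dist_nonneg]
    exact mul_le_mul_of_nonneg_left hd hLJ0
  have hJu' : ∀ (x x' : EuclideanSpace ℝ (Fin d)) (u u' v' : U),
      |J (x, u) (x', u') - J (x, u) (x', v')| ≤ LJ * dist u' v' := by
    intro x x' u u' v'
    refine le_trans (hdpair (x, u) (x, u) (x', u') (x', v')) ?_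
    have hd : dist ((x, u), (x', u')) ((x, u), (x', v')) ≤ dist u' v' := by
      rw [Prod.dist_eq, Prod.dist_eq, Prod.dist_eq]
      simp [dist_self, dist_nonneg]
    exact mul_le_mul_of_nonneg_left hd hLJ0
  -- slice continuity
  have hslice : ∀ (x x' : EuclideanSpace ℝ (Fin d)) (u : U), Continuous fun u' : U => J (x, u) (x', u') := by
    intro x x' u
    have hc : Continuous fun u' : U =>
        (((x, u), (x', u')) : (EuclideanSpace ℝ (Fin d) × U) × (EuclideanSpace ℝ (Fin d) × U)) := by
      fun_prop
    exact hJ.continuous.comp hc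
  -- Lipschitz and continuity of G x x' σ'
  have hGlip : ∀ (x x' : EuclideanSpace ℝ (Fin d)) (σ' : Measure U), IsProbabilityMeasure σ' →
      ∀ u v : U, |(∫ u', J (x, u) (x', u') ∂σ') - ∫ u', J (x, v) (x', u') ∂σ'| ≤
        LJ * dist u v := by
    intro x x' σ' hσ' u v
    exact int_diff_le σ' _ _ (hslice x x' u) (hslice x x' v) _ (fun u' => hJu x x' u v u')
  have hGc : ∀ (x x' : EuclideanSpace ℝ (Fin d)) (σ' : Measure U), IsProbabilityMeasure σ' →
      Continuous fun u : U => ∫ u', J (x, u) (x', u') ∂σ' := by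
    intro x x' σ' hσ'
    exact (LipschitzWith.of_dist_le_mul (K := LJ) fun u v => by
      rw [Real.dist_eq]; exact hGlip x x' σ' hσ' u v).continuous
  -- difference of G in x
  have hGx : ∀ (x y x' : EuclideanSpace ℝ (Fin d)) (σ' : Measure U), IsProbabilityMeasure σ' → ∀ u : U,
      |(∫ u', J (x, u) (x', u') ∂σ') - ∫ u', J (y, u) (x', u') ∂σ'| ≤ LJ * dist x y := by
    intro x y x' σ' hσ' u
    exact int_diff_le σ' _ _ (hslice x x' u) (hslice y x' u) _ (fun u' => hJx x y x' u u')
  have hGx' : ∀ (x x' y' : EuclideanSpace ℝ (Fin d)) (σ' : Measure U), IsProbabilityMeasure σ' → ∀ u : U,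
      |(∫ u', J (x, u) (x', u') ∂σ') - ∫ u', J (x, u) (y', u') ∂σ'| ≤ LJ * dist x' y' := by
    intro x x' y' σ' hσ' u
    exact int_diff_le σ' _ _ (hslice x x' u) (hslice x y' u) _ (fun u' => hJx' x x' y' u u')
  -- difference of G in σ'
  have hGσ' : ∀ (x x' : EuclideanSpace ℝ (Fin d)) (u : U),
      |(∫ u', J (x, u) (x', u') ∂σ₁') - ∫ u', J (x, u) (x', u') ∂σ₂'| ≤
        (LJ : ℝ) * (1 + D) * B' := by
    intro x x' u
    obtain ⟨u₀⟩ := hne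
    set f : U → ℝ := fun u' => J (x, u) (x', u') - J (x, u) (x', u₀) with hf
    have hfc : Continuous f := (hslice x x' u).sub continuous_const
    have hfA : ∀ u', |f u'| ≤ LJ * D := by
      intro u'
      exact le_trans (hJu' x x' u u' u₀) (mul_le_mul_of_nonneg_left (hDle u' u₀) hLJ0)
    have hfK : ∀ u' v', |f u' - f v'| ≤ LJ * dist u' v' := by
      intro u' v'
      have he : f u' - f v' = J (x, u) (x', u') - J (x, u) (x', v') := by simp [hf]
      rw [he]; exact hJu' x x' u u' v'
    have hp := pair_abs_le σ₁' σ₂' f (LJ * D) LJ (mul_nonneg hLJ0 hD0) hLJ0 hfA hfK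
    have hi : ∀ (σ' : Measure U), IsProbabilityMeasure σ' →
        ∫ u', f u' ∂σ' = (∫ u', J (x, u) (x', u') ∂σ') - J (x, u) (x', u₀) := by
      intro σ' hσ'
      rw [hf, integral_sub (cont_integrable σ' (hslice x x' u)) (integrable_const _),
        integral_const]
      simp
    rw [hi σ₁' ‹_›, hi σ₂' ‹_›] at hp
    have he : (∫ u', J (x, u) (x', u') ∂σ₁') - ∫ u', J (x, u) (x', u') ∂σ₂' =
        ((∫ u', J (x, u) (x', u') ∂σ₁') - J (x, u) (x', u₀)) -
        ((∫ u', J (x, u) (x', u') ∂σ₂') - J (x, u) (x', u₀)) := by ring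
    rw [he]
    calc _ ≤ ((LJ : ℝ) * D + LJ) * B' := hp
      _ = (LJ : ℝ) * (1 + D) * B' := by ring
  -- main sSup bound
  unfold blNormOf
  apply Real.sSup_le
  · rintro r ⟨φ, ⟨Kφ, hKφ⟩, hn, rfl⟩
    have hφc : Continuous φ := hKφ.continuous
    set s := ⨆ u, |φ u| with hsdef
    have hbdd : BddAbove (Set.range fun u => |φ u|) := (isCompact_range hφc.abs).bddAbove
    have hs : ∀ u, |φ u| ≤ s := fun u => le_ciSup hbdd u
    have hs0 : 0 ≤ s := le_trans (abs_nonneg _) (hs (Classical.arbitrary U))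
    have hL0 := lipConst_nonneg φ
    have hLd : ∀ u v, |φ u - φ v| ≤ lipConst φ * dist u v := dist_le_lipConst hKφ
    have hsL : s + lipConst φ ≤ 1 := hn
    have hφb1 : ∀ u, |φ u| ≤ 1 := fun u => le_trans (hs u) (by linarith)
    -- telescope pieces
    have T1 : fσPair J x₁ x₁' σ₁ σ₁' φ - fσPair J x₂ x₁' σ₁ σ₁' φ ≤
        2 * ((LJ : ℝ) * dist x₁ x₂) := by
      have := master_claim σ₁ φ (fun u => ∫ u', J (x₁, u) (x₁', u') ∂σ₁')
        (fun u => ∫ u', J (x₂, u) (x₁', u') ∂σ₁') hφc hφb1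
        (hGc x₁ x₁' σ₁' ‹_›) (hGc x₂ x₁' σ₁' ‹_›)
        ((LJ : ℝ) * dist x₁ x₂) (by positivity)
        (fun u => hGx x₁ x₂ x₁' σ₁' ‹_› u)
      simpa [fσPair] using this
    have T2 : fσPair J x₂ x₁' σ₁ σ₁' φ - fσPair J x₂ x₁' σ₂ σ₁' φ ≤
        2 * (LJ : ℝ) * (1 + D) * B := by
      have := claim2 σ₁ σ₂ φ (fun u => ∫ u', J (x₂, u) (x₁', u') ∂σ₁') hφc
        (hGc x₂ x₁' σ₁' ‹_›) LJ hLJ0 (hGlip x₂ x₁' σ₁' ‹_›)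
        s (lipConst φ) hs0 hL0 hs hLd hsL D hD0 hDle
      simpa [fσPair] using this
    have T3 : fσPair J x₂ x₁' σ₂ σ₁' φ - fσPair J x₂ x₂' σ₂ σ₁' φ ≤
        2 * ((LJ : ℝ) * dist x₁' x₂') := by
      have := master_claim σ₂ φ (fun u => ∫ u', J (x₂, u) (x₁', u') ∂σ₁')
        (fun u => ∫ u', J (x₂, u) (x₂', u') ∂σ₁') hφc hφb1
        (hGc x₂ x₁' σ₁' ‹_›) (hGc x₂ x₂' σ₁' ‹_›)
        ((LJ : ℝ) * dist x₁' x₂') (by positivity)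
        (fun u => hGx' x₂ x₁' x₂' σ₁' ‹_› u)
      simpa [fσPair] using this
    have T4 : fσPair J x₂ x₂' σ₂ σ₁' φ - fσPair J x₂ x₂' σ₂ σ₂' φ ≤
        2 * ((LJ : ℝ) * (1 + D) * B') := by
      have := master_claim σ₂ φ (fun u => ∫ u', J (x₂, u) (x₂', u') ∂σ₁')
        (fun u => ∫ u', J (x₂, u) (x₂', u') ∂σ₂') hφc hφb1
        (hGc x₂ x₂' σ₁' ‹_›) (hGc x₂ x₂' σ₂' ‹_›)
        ((LJ : ℝ) * (1 + D) * B')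
        (mul_nonneg (mul_nonneg hLJ0 (by linarith)) hB'0)
        (fun u => hGσ' x₂ x₂' u)
      simpa [fσPair] using this
    have key : fσPair J x₁ x₁' σ₁ σ₁' φ - fσPair J x₂ x₂' σ₂ σ₂' φ =
        (fσPair J x₁ x₁' σ₁ σ₁' φ - fσPair J x₂ x₁' σ₁ σ₁' φ) +
        (fσPair J x₂ x₁' σ₁ σ₁' φ - fσPair J x₂ x₁' σ₂ σ₁' φ) +
        (fσPair J x₂ x₁' σ₂ σ₁' φ - fσPair J x₂ x₂' σ₂ σ₁' φ) +
        (fσPair J x₂ x₂' σ₂ σ₁' φ - fσPair J x₂ x₂' σ₂ σ₂' φ) := by ring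
    show fσPair J x₁ x₁' σ₁ σ₁' φ - fσPair J x₂ x₂' σ₂ σ₂' φ ≤
        2 * (LJ : ℝ) * (1 + D) * (dist x₁ x₂ + B + dist x₁' x₂' + B')
    rw [key]
    have m1 : (0:ℝ) ≤ (LJ : ℝ) * D * dist x₁ x₂ :=
      mul_nonneg (mul_nonneg hLJ0 hD0) dist_nonneg
    have m2 : (0:ℝ) ≤ (LJ : ℝ) * D * dist x₁' x₂' :=
      mul_nonneg (mul_nonneg hLJ0 hD0) dist_nonneg
    nlinarith [T1, T2, T3, T4]
  · have h1 : (0:ℝ) ≤ 2 * (LJ : ℝ) * (1 + D) := by positivity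
    have h2 : (0:ℝ) ≤ dist x₁ x₂ + B + dist x₁' x₂' + B' := by
      have := dist_nonneg (x := x₁) (y := x₂)
      have := dist_nonneg (x := x₁') (y := x₂')
      linarith
    exact mul_nonneg h1 h2
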